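/- For every s > 2 there exist constants C₁, C₂ > 0 (depending only on s) with the following property: for every real random variable X with Lebesgue density p, E X = 0, Var(X) = 1, E|X|^s < ∞ and ‖p − φ‖_2 ≤ 1, D(X) ≤ (C₁ + ‖p − φ‖_∞)·(‖p − φ‖_1 + ‖p − φ‖_2) + C₂·(E|X|^s)^{2/s}·(‖p − φ‖_1 + ‖p − φ‖_2)^{1−2/s}. -/

import Mathlib

open MeasureTheory Real Filter
open scoped ENNReal

noncomputable section

/-- The standard Gaussian density on `ℝ`. -/
def gauss (x : ℝ) : ℝ := (Real.sqrt (2 * Real.pi))⁻¹ * Real.exp (-x ^ 2 / 2)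

/-- The real-valued `L^q(ℝ)` norm. -/
def nrm (f : ℝ → ℝ) (q : ℝ≥0∞) : ℝ := (eLpNorm f q volume).toReal

/-- Kullback–Leibler divergence between densities:  `∫ p_X ln (p_X / p_Y)`. -/
def KLdiv (pX pY : ℝ → ℝ) : ℝ := ∫ x, pX x * Real.log (pX x / pY x)

open Set


lemma sqrt2pi_pos : 0 < Real.sqrt (2 * Real.pi) :=
  Real.sqrt_pos.2 (by positivity)

lemma sqrt2pi_ge_two : 2 ≤ Real.sqrt (2 * Real.pi) := by
  have : (4:ℝ) ≤ 2 * Real.pi := by nlinarith [Real.pi_gt_three]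
  calc (2:ℝ) = Real.sqrt 4 := by
        rw [show (4:ℝ) = 2^2 by norm_num, Real.sqrt_sq (by norm_num)]
    _ ≤ Real.sqrt (2 * Real.pi) := Real.sqrt_le_sqrt this

lemma sqrt2pi_le_three : Real.sqrt (2 * Real.pi) ≤ 3 := by
  have : 2 * Real.pi ≤ 9 := by nlinarith [Real.pi_lt_d2]
  calc Real.sqrt (2 * Real.pi) ≤ Real.sqrt 9 := Real.sqrt_le_sqrt this
    _ = 3 := by rw [show (9:ℝ) = 3^2 by norm_num, Real.sqrt_sq (by norm_num)]

lemma gauss_pos (x : ℝ) : 0 < gauss x := by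
  unfold gauss; positivity

lemma gauss_le_one (x : ℝ) : gauss x ≤ 1 := by
  unfold gauss
  have h1 : Real.exp (-x ^ 2 / 2) ≤ 1 := Real.exp_le_one_iff.2 (by nlinarith [sq_nonneg x])
  have h2 : (Real.sqrt (2 * Real.pi))⁻¹ ≤ 1 := by
    rw [inv_le_one_iff₀]; right; linarith [sqrt2pi_ge_two]
  calc (Real.sqrt (2 * Real.pi))⁻¹ * Real.exp (-x ^ 2 / 2)
      ≤ 1 * 1 := by
        apply mul_le_mul h2 h1 (by positivity) (by norm_num)
    _ = 1 := by norm_num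

lemma continuous_gauss : Continuous gauss := by
  unfold gauss; fun_prop

lemma integrable_gauss : Integrable gauss := by
  have h : Integrable (fun x : ℝ => Real.exp (-(1/2) * x ^ 2)) := integrable_exp_neg_mul_sq (by norm_num)
  have := h.const_mul (Real.sqrt (2 * Real.pi))⁻¹
  apply this.congr
  filter_upwards with x
  unfold gauss; ring_nf

lemma integral_gauss_eq_one : ∫ x, gauss x = 1 := by
  unfold gauss
  rw [MeasureTheory.integral_const_mul]
  have : ∀ x : ℝ, Real.exp (-x ^ 2 / 2) = Real.exp (-(1/2) * x ^ 2) := fun x => by ring_nf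
  simp_rw [this, integral_gaussian]
  rw [show Real.pi / (1/2) = 2 * Real.pi by ring]
  exact inv_mul_cancel₀ (ne_of_gt sqrt2pi_pos)

lemma log_gauss (x : ℝ) : Real.log (gauss x) = -Real.log (Real.sqrt (2 * Real.pi)) + (-x ^ 2 / 2) := by
  unfold gauss
  rw [Real.log_mul (by positivity) (by positivity), Real.log_inv, Real.log_exp]

lemma log_sqrt2pi_nonneg : 0 ≤ Real.log (Real.sqrt (2 * Real.pi)) :=
  Real.log_nonneg (by linarith [sqrt2pi_ge_two])

lemma log_sqrt2pi_le_one : Real.log (Real.sqrt (2 * Real.pi)) ≤ 1 := by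
  have h1 : Real.sqrt (2 * Real.pi) ≤ Real.exp 1 := by
    have h2 : 2 * Real.pi ≤ 6.3 := by nlinarith [Real.pi_lt_d2]
    have : Real.sqrt (2 * Real.pi) ≤ 2.52 := by
      calc Real.sqrt (2 * Real.pi) ≤ Real.sqrt 6.3 := Real.sqrt_le_sqrt h2
        _ ≤ 2.52 := by
          rw [show (6.3:ℝ) = 2.52^2 - 0.0504 by norm_num]
          calc Real.sqrt (2.52^2 - 0.0504) ≤ Real.sqrt (2.52^2) := Real.sqrt_le_sqrt (by norm_num)
            _ = 2.52 := Real.sqrt_sq (by norm_num)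
    linarith [Real.exp_one_gt_d9]
  calc Real.log (Real.sqrt (2 * Real.pi)) ≤ Real.log (Real.exp 1) :=
        Real.log_le_log sqrt2pi_pos h1
    _ = 1 := Real.log_exp 1

lemma integrable_id_mul_exp : Integrable (fun x : ℝ => x * Real.exp (-x ^ 2 / 2)) := by
  have h := integrable_rpow_mul_exp_neg_mul_sq (b := 1/2) (by norm_num) (s := 1) (by norm_num)
  apply h.congr
  filter_upwards with x
  rw [Real.rpow_one]; ring_nf

lemma integral_Ioi_id_mul_exp {T : ℝ} :
    ∫ x in Ioi T, x * Real.exp (-x ^ 2 / 2) = Real.exp (-T ^ 2 / 2) := by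
  have hderiv : ∀ x ∈ Ici T, HasDerivAt (fun y : ℝ => -Real.exp (-y ^ 2 / 2))
      (x * Real.exp (-x ^ 2 / 2)) x := by
    intro x _
    have h1 : HasDerivAt (fun y : ℝ => -y ^ 2 / 2) (-x) x := by
      have := (hasDerivAt_pow 2 x).neg.div_const 2
      simpa using this.congr_deriv (by push_cast; ring)
    have h2 := (h1.exp).neg
    exact h2.congr_deriv (by ring)
  have htend : Tendsto (fun y : ℝ => -Real.exp (-y ^ 2 / 2)) atTop (nhds 0) := by
    have hsq : Tendsto (fun y : ℝ => y ^ 2 / 2) atTop atTop :=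
      (tendsto_pow_atTop (two_ne_zero)).atTop_div_const (by norm_num)
    have h := (Real.tendsto_exp_neg_atTop_nhds_zero).comp hsq
    rw [show (0:ℝ) = -0 by norm_num]
    apply Tendsto.neg
    apply h.congr
    intro y; simp only [Function.comp]; ring_nf
  have := integral_Ioi_of_hasDerivAt_of_tendsto' hderiv
    integrable_id_mul_exp.integrableOn htend
  rw [this]; ring

lemma gauss_tail {T : ℝ} (hT : 1 ≤ T) :
    ∫ x in {x : ℝ | T < |x|}, gauss x ≤ Real.exp (-T ^ 2 / 2) := by
  have hset : {x : ℝ | T < |x|} = Iio (-T) ∪ Ioi T := by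
    ext x; simp [lt_abs, mem_Iio, mem_Ioi, or_comm, lt_neg]
  have hIoi : ∫ x in Ioi T, gauss x ≤ (Real.sqrt (2 * Real.pi))⁻¹ * Real.exp (-T ^ 2 / 2) := by
    have hmono : ∫ x in Ioi T, gauss x ≤
        ∫ x in Ioi T, (Real.sqrt (2 * Real.pi))⁻¹ * (x * Real.exp (-x ^ 2 / 2)) := by
      apply setIntegral_mono_on integrable_gauss.integrableOn
        ((integrable_id_mul_exp.const_mul _).integrableOn) measurableSet_Ioi
      intro x hx
      have hx1 : 1 ≤ x := le_trans hT (le_of_lt hx)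
      unfold gauss
      have : Real.exp (-x ^ 2 / 2) ≤ x * Real.exp (-x ^ 2 / 2) := by
        nlinarith [Real.exp_pos (-x ^ 2 / 2)]
      have h0 : (0:ℝ) ≤ (Real.sqrt (2 * Real.pi))⁻¹ := by positivity
      exact mul_le_mul_of_nonneg_left this h0
    rw [MeasureTheory.integral_const_mul, integral_Ioi_id_mul_exp] at hmono
    exact hmono
  have hIio : ∫ x in Iio (-T), gauss x = ∫ x in Ioi T, gauss x := by
    have h1 : ∫ x in Ioi T, gauss (-x) = ∫ x in Iic (-T), gauss x := integral_comp_neg_Ioi T gauss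
    have h2 : ∀ x : ℝ, gauss (-x) = gauss x := by intro x; unfold gauss; ring_nf
    simp_rw [h2] at h1
    rw [integral_Iic_eq_integral_Iio] at h1
    exact h1.symm
  have hdisj : Disjoint (Iio (-T)) (Ioi T) := by
    rw [Set.disjoint_left]
    intro x h1 h2
    simp only [mem_Iio, mem_Ioi] at h1 h2
    linarith
  rw [hset, setIntegral_union hdisj measurableSet_Ioi
      integrable_gauss.integrableOn integrable_gauss.integrableOn, hIio]
  have h3 : (Real.sqrt (2 * Real.pi))⁻¹ ≤ 1/2 := by
    rw [inv_le_comm₀ sqrt2pi_pos (by norm_num)]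
    linarith [sqrt2pi_ge_two]
  have h4 := Real.exp_pos (-T ^ 2 / 2)
  nlinarith [hIoi]

/-- Pointwise bound on the central region. -/
lemma ptwise_center {pv g C : ℝ} (hp : 0 ≤ pv) (hg : 0 < g) (hC : g⁻¹ ≤ C) :
    pv * Real.log (pv / g) ≤ (pv - g) + C * (pv - g) ^ 2 := by
  rcases eq_or_lt_of_le hp with h0 | hppos
  · rw [← h0]
    simp only [zero_div, Real.log_zero, mul_zero]
    have h1 : g * g⁻¹ = 1 := mul_inv_cancel₀ (ne_of_gt hg)
    nlinarith [mul_le_mul_of_nonneg_left hC (le_of_lt (mul_pos hg hg))]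
  · have hlog : Real.log (pv / g) ≤ pv / g - 1 :=
      Real.log_le_sub_one_of_pos (div_pos hppos hg)
    have h1 : pv * Real.log (pv / g) ≤ pv * (pv / g - 1) :=
      mul_le_mul_of_nonneg_left hlog hp
    have h2 : pv * (pv / g - 1) = (pv - g) + (pv - g) ^ 2 * g⁻¹ := by
      field_simp; ring
    have h3 : (pv - g) ^ 2 * g⁻¹ ≤ (pv - g) ^ 2 * C :=
      mul_le_mul_of_nonneg_left hC (sq_nonneg _)
    nlinarith

/-- Pointwise bound on tail regions. -/
lemma ptwise_tail (pv x : ℝ) (hp : 0 ≤ pv) :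
    pv * Real.log (pv / gauss x) ≤
      pv ^ 2 + (x ^ 2 / 2) * pv + Real.log (Real.sqrt (2 * Real.pi)) * pv := by
  rcases eq_or_lt_of_le hp with h0 | hppos
  · rw [← h0]; simp
  · rw [Real.log_div (ne_of_gt hppos) (ne_of_gt (gauss_pos x)), log_gauss]
    have hlog : Real.log pv ≤ pv - 1 := Real.log_le_sub_one_of_pos hppos
    nlinarith

lemma sq_add_bound (a b : ℝ) : (a + b) ^ 2 ≤ 2 * a ^ 2 + 2 * b ^ 2 := by nlinarith [sq_nonneg (a - b)]

lemma nrm_one_eq {u : ℝ → ℝ} (hu : Integrable u) : nrm u 1 = ∫ x, |u x| := by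
  have hm : MemLp u 1 volume := (memLp_one_iff_integrable).2 hu
  rw [nrm, hm.eLpNorm_eq_integral_rpow_norm one_ne_zero ENNReal.one_ne_top]
  rw [ENNReal.toReal_ofReal]
  · simp [Real.norm_eq_abs]
  · positivity

lemma nrm_two_sq {u : ℝ → ℝ} (hm : MemLp u 2 volume) : nrm u 2 ^ 2 = ∫ x, u x ^ 2 := by
  rw [nrm, hm.eLpNorm_eq_integral_rpow_norm two_ne_zero ENNReal.ofNat_ne_top]
  have hint : ∫ x, ‖u x‖ ^ (2:ℝ≥0∞).toReal = ∫ x, u x ^ 2 := by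
    congr 1; funext x
    rw [ENNReal.toReal_ofNat, Real.norm_eq_abs, Real.rpow_two, sq_abs]
  have h0 : (0:ℝ) ≤ ∫ x, u x ^ 2 := integral_nonneg (fun x => sq_nonneg _)
  rw [ENNReal.toReal_ofReal (by rw [hint]; positivity), hint]
  rw [ENNReal.toReal_ofNat, ← Real.rpow_natCast (_ ^ (2:ℝ)⁻¹) 2, ← Real.rpow_mul h0]
  norm_num

lemma integrable_sq_of_memL2 {u : ℝ → ℝ} (hm : MemLp u 2 volume) :
    Integrable (fun x => u x ^ 2) := by
  have := hm.integrable_norm_rpow two_ne_zero ENNReal.ofNat_ne_top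
  apply this.congr
  filter_upwards with x
  rw [ENNReal.toReal_ofNat, Real.norm_eq_abs, Real.rpow_two, sq_abs]

lemma integrable_gauss_sq : Integrable (fun x => gauss x ^ 2) := by
  apply integrable_gauss.mono ((continuous_gauss.pow 2).aestronglyMeasurable)
  filter_upwards with x
  rw [Real.norm_eq_abs, Real.norm_eq_abs, abs_of_pos (gauss_pos x),
    Pi.pow_apply, abs_of_pos (pow_pos (gauss_pos x) 2)]
  nlinarith [gauss_pos x, gauss_le_one x]

lemma integral_gauss_sq_le_one : ∫ x, gauss x ^ 2 ≤ 1 := by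
  calc ∫ x, gauss x ^ 2 ≤ ∫ x, gauss x := by
        apply integral_mono integrable_gauss_sq integrable_gauss
        intro x
        show gauss x ^ 2 ≤ gauss x
        nlinarith [gauss_pos x, gauss_le_one x]
    _ = 1 := integral_gauss_eq_one

set_option maxHeartbeats 2000000 in
theorem D_upper_bound_L1_L2_with_sup :
    ∀ s : ℝ, 2 < s →
      ∃ C₁ C₂ : ℝ, 0 < C₁ ∧ 0 < C₂ ∧
        ∀ p : ℝ → ℝ, Measurable p → (∀ x, 0 ≤ p x) → (∫ x, p x) = 1 →
          Integrable (fun x => x * p x) → (∫ x, x * p x) = 0 →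
          Integrable (fun x => x ^ 2 * p x) → (∫ x, x ^ 2 * p x) = 1 →
          Integrable (fun x => |x| ^ s * p x) →
          eLpNorm (fun x => p x - gauss x) 2 volume ≤ 1 →
            KLdiv p gauss ≤
              (C₁ + nrm (fun x => p x - gauss x) ⊤) *
                  (nrm (fun x => p x - gauss x) 1 + nrm (fun x => p x - gauss x) 2)
              + C₂ * (∫ x, |x| ^ s * p x) ^ (2 / s) *
                  (nrm (fun x => p x - gauss x) 1 + nrm (fun x => p x - gauss x) 2) ^ (1 - 2 / s) := by
  intro s hs
  refine ⟨16, 2, by norm_num, by norm_num, ?_⟩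
  intro p hpm hp0 hip1 hxpint hxp0 hx2pint hx2p1 hxspint hL2
  set u : ℝ → ℝ := fun x => p x - gauss x with hu_def
  have hpint : Integrable p := by
    by_contra h
    rw [MeasureTheory.integral_undef h] at hip1
    norm_num at hip1
  have huint : Integrable u := hpint.sub integrable_gauss
  have humem : MemLp u 2 volume :=
    ⟨huint.aestronglyMeasurable, lt_of_le_of_lt hL2 ENNReal.one_lt_top⟩
  set ε₁ := nrm u 1 with hε₁def
  set ε₂ := nrm u 2 with hε₂def
  set β := ∫ x, |x| ^ s * p x with hβdef
  have hε₁ : ε₁ = ∫ x, |u x| := nrm_one_eq huint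
  have hε₂sq : ε₂ ^ 2 = ∫ x, u x ^ 2 := nrm_two_sq humem
  have hu2int : Integrable (fun x => u x ^ 2) := integrable_sq_of_memL2 humem
  have huabsint : Integrable (fun x => |u x|) := huint.abs
  have hε₁0 : 0 ≤ ε₁ := ENNReal.toReal_nonneg
  have hε₂0 : 0 ≤ ε₂ := ENNReal.toReal_nonneg
  have hε₂1 : ε₂ ≤ 1 := by
    have := ENNReal.toReal_mono ENNReal.one_ne_top hL2
    simpa [hε₂def, nrm] using this
  have hβ0 : 0 ≤ β := integral_nonneg (fun x => mul_nonneg (by positivity) (hp0 x))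
  have hM0 : 0 ≤ nrm u ⊤ := ENNReal.toReal_nonneg
  have hs0 : 0 < s := by linarith only [hs]
  have hXnn : 0 ≤ β ^ (2/s) * (ε₁ + ε₂) ^ (1 - 2/s) :=
    mul_nonneg (Real.rpow_nonneg hβ0 _) (Real.rpow_nonneg (by linarith only [hε₁0, hε₂0]) _)
  -- reduce to the version without the sup-norm
  suffices hred : KLdiv p gauss ≤ 16 * (ε₁ + ε₂) + 2 * (β ^ (2/s) * (ε₁ + ε₂) ^ (1 - 2/s)) by
    have hεnn : 0 ≤ ε₁ + ε₂ := by linarith only [hε₁0, hε₂0]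
    nlinarith only [hred, mul_nonneg hM0 hεnn, hε₁0, hε₂0, hXnn]
  clear_value u ε₁ ε₂ β
  rw [KLdiv]
  set f : ℝ → ℝ := fun x => p x * Real.log (p x / gauss x) with hf_def
  clear_value f
  by_cases hfint : Integrable f
  swap
  · rw [MeasureTheory.integral_undef hfint]
    nlinarith only [hXnn, hε₁0, hε₂0]
  by_cases hε₂z : ε₂ = 0
  · -- p = gauss a.e., KL = 0
    have h0 : eLpNorm u 2 volume = 0 := by
      have h00 : nrm u 2 = 0 := by rw [← hε₂def]; exact hε₂z
      rcases (ENNReal.toReal_eq_zero_iff _).1 h00 with h | h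
      · exact h
      · exact absurd h (ne_top_of_le_ne_top ENNReal.one_ne_top hL2)
    have hae : u =ᵐ[volume] 0 :=
      (eLpNorm_eq_zero_iff huint.aestronglyMeasurable two_ne_zero).1 h0
    have hz : ∫ x, f x = 0 := by
      apply integral_eq_zero_of_ae
      filter_upwards [hae] with x hx
      have hx' : p x = gauss x := by
        have h := hx
        rw [hu_def] at h
        simp only [Pi.zero_apply] at h
        linarith only [h]
      simp [hf_def, hx', div_self (ne_of_gt (gauss_pos x))]
    rw [hz]
    nlinarith only [hXnn, hε₁0, hε₂0]
  by_cases hsmall : ε₁ + ε₂ ≤ 1/2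
  swap
  · -- large regime
    have hi1 : Integrable (fun x => 2 * gauss x ^ 2) := integrable_gauss_sq.const_mul 2
    have hi2 : Integrable (fun x => 2 * u x ^ 2) := hu2int.const_mul 2
    have hi3 : Integrable (fun x => (1/2) * (x ^ 2 * p x)) := hx2pint.const_mul (1/2)
    have hi4 : Integrable (fun x => Real.log (Real.sqrt (2 * Real.pi)) * p x) :=
      hpint.const_mul _
    have hi12 : Integrable (fun x => 2 * gauss x ^ 2 + 2 * u x ^ 2) := hi1.add hi2
    have hi123 : Integrable (fun x => 2 * gauss x ^ 2 + 2 * u x ^ 2 + (1/2) * (x ^ 2 * p x)) :=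
      hi12.add hi3
    have hgint : Integrable (fun x => 2 * gauss x ^ 2 + 2 * u x ^ 2 + (1/2) * (x ^ 2 * p x)
        + Real.log (Real.sqrt (2 * Real.pi)) * p x) := hi123.add hi4
    have h1 : ∫ x, f x ≤ ∫ x, (2 * gauss x ^ 2 + 2 * u x ^ 2 + (1/2) * (x ^ 2 * p x)
        + Real.log (Real.sqrt (2 * Real.pi)) * p x) := by
      apply integral_mono hfint hgint
      intro x
      have ht := ptwise_tail (p x) x (hp0 x)
      have hsq : p x ^ 2 ≤ 2 * gauss x ^ 2 + 2 * u x ^ 2 := by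
        have h := sq_add_bound (gauss x) (u x)
        have hpx : p x = gauss x + u x := by simp [hu_def]
        rw [hpx]; exact h
      have hring : x ^ 2 / 2 * p x = 1/2 * (x ^ 2 * p x) := by ring
      rw [hring] at ht
      simp only [hf_def]
      exact le_trans ht (add_le_add (add_le_add_left hsq _) le_rfl)
    have h2 : ∫ x, (2 * gauss x ^ 2 + 2 * u x ^ 2 + (1/2) * (x ^ 2 * p x)
          + Real.log (Real.sqrt (2 * Real.pi)) * p x)
        = 2 * (∫ x, gauss x ^ 2) + 2 * (∫ x, u x ^ 2) + (1/2) * (∫ x, x ^ 2 * p x)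
          + Real.log (Real.sqrt (2 * Real.pi)) * (∫ x, p x) := by
      rw [integral_add hi123 hi4, integral_add hi12 hi3, integral_add hi1 hi2,
          MeasureTheory.integral_const_mul, MeasureTheory.integral_const_mul,
          MeasureTheory.integral_const_mul, MeasureTheory.integral_const_mul]
    rw [h2, hx2p1, hip1, ← hε₂sq] at h1
    have hε₂sq1 : ε₂ ^ 2 ≤ 1 := by nlinarith only [hε₂0, hε₂1]
    have hlarge : 1/2 < ε₁ + ε₂ := not_le.1 hsmall
    have hg2 := integral_gauss_sq_le_one
    have hlog := log_sqrt2pi_le_one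
    linarith only [h1, hε₂sq1, hlarge, hg2, hlog, hXnn]
  -- small regime
  have hε₂pos : 0 < ε₂ := lt_of_le_of_ne hε₂0 (Ne.symm hε₂z)
  have hεpos : 0 < ε₁ + ε₂ := by linarith only [hε₁0, hε₂pos]
  have hε₂half : ε₂ ≤ 1/2 := by linarith only [hsmall, hε₁0]
  have hεne : ε₁ + ε₂ ≠ 0 := ne_of_gt hεpos
  have hs0' : s ≠ 0 := ne_of_gt hs0
  have hβpos : 0 < β := by
    rcases eq_or_lt_of_le hβ0 with h | h
    · exfalso
      have hae : (fun x => |x| ^ s * p x) =ᵐ[volume] 0 := by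
        rw [hβdef] at h
        exact (integral_eq_zero_iff_of_nonneg
          (fun x => mul_nonneg (Real.rpow_nonneg (abs_nonneg x) s) (hp0 x)) hxspint).1 h.symm
      have hns : ∀ᵐ x : ℝ ∂volume, x ≠ 0 := by
        rw [ae_iff]
        convert Real.volume_singleton (a := (0:ℝ)) using 2
        ext x
        simp
      have hae2 : (fun x => x ^ 2 * p x) =ᵐ[volume] (fun _ => (0:ℝ)) := by
        filter_upwards [hae, hns] with x hx hx0
        have hxs : 0 < |x| ^ s := Real.rpow_pos_of_pos (abs_pos.2 hx0) s
        have hx' : |x| ^ s * p x = 0 := hx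
        have hpx : p x = 0 := by
          rcases mul_eq_zero.1 hx' with h' | h'
          · exact absurd h' (ne_of_gt hxs)
          · exact h'
        simp [hpx]
      have hcontra := integral_congr_ae hae2
      rw [hx2p1] at hcontra
      simp at hcontra
    · exact h
  -- thresholds
  set T₁ := Real.sqrt (2 * Real.log ε₂⁻¹) with hT₁def
  have hε₂inv : (2:ℝ) ≤ ε₂⁻¹ := by
    have h := one_div_le_one_div_of_le hε₂pos hε₂half
    norm_num [one_div] at h
    exact h
  have hlogpos : 1/2 ≤ Real.log ε₂⁻¹ := by
    have h1 : Real.log 2 ≤ Real.log ε₂⁻¹ := Real.log_le_log two_pos hε₂inv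
    have := Real.log_two_gt_d9
    linarith only [h1, this]
  have hT₁sq : T₁ ^ 2 = 2 * Real.log ε₂⁻¹ := Real.sq_sqrt (by linarith only [hlogpos])
  have hT₁1 : 1 ≤ T₁ := by nlinarith only [Real.sqrt_nonneg (2 * Real.log ε₂⁻¹), hT₁sq, hlogpos]
  have hexpT₁ : Real.exp (-T₁ ^ 2 / 2) = ε₂ := by
    rw [hT₁sq, show -(2 * Real.log ε₂⁻¹) / 2 = -Real.log ε₂⁻¹ by ring, Real.log_inv, neg_neg,
      Real.exp_log hε₂pos]
  have hexpT₁' : Real.exp (T₁ ^ 2 / 2) = ε₂⁻¹ := by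
    rw [hT₁sq, show 2 * Real.log ε₂⁻¹ / 2 = Real.log ε₂⁻¹ by ring,
      Real.exp_log (inv_pos.2 hε₂pos)]
  set T₂ := (β / (ε₁ + ε₂)) ^ s⁻¹ with hT₂def
  have hdivpos : 0 < β / (ε₁ + ε₂) := div_pos hβpos hεpos
  have hT₂pos : 0 < T₂ := Real.rpow_pos_of_pos hdivpos _
  set T := max T₁ T₂ with hTdef
  have hTT₁ : T₁ ≤ T := le_max_left _ _
  have hTT₂ : T₂ ≤ T := le_max_right _ _
  have hT1 : 1 ≤ T := le_trans hT₁1 hTT₁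
  have hTpos : 0 < T := by linarith only [hT1]
  clear_value T₁ T₂ T
  have hT₂s : T₂ ^ s = β / (ε₁ + ε₂) := by
    rw [hT₂def, ← Real.rpow_mul (le_of_lt hdivpos), inv_mul_cancel₀ hs0', Real.rpow_one]
  have hkey1 : β * T₂ ^ (-s) = ε₁ + ε₂ := by
    rw [Real.rpow_neg (le_of_lt hT₂pos), hT₂s]
    field_simp
  have hβrw : β * T₂ ^ (2 - s) = β ^ (2/s) * (ε₁ + ε₂) ^ (1 - 2/s) := by
    have h1 : T₂ ^ (2 - s) = β ^ (2/s - 1) / (ε₁ + ε₂) ^ (2/s - 1) := by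
      rw [hT₂def, ← Real.rpow_mul (le_of_lt hdivpos),
        show s⁻¹ * (2 - s) = 2/s - 1 by field_simp,
        Real.div_rpow hβ0 (le_of_lt hεpos)]
    rw [h1, div_eq_mul_inv, ← Real.rpow_neg (le_of_lt hεpos),
      show -(2/s - 1) = 1 - 2/s by ring, ← mul_assoc]
    congr 1
    nth_rewrite 1 [← Real.rpow_one β]
    rw [← Real.rpow_add hβpos]
    congr 1
    ring
  have hT2mono : T ^ (2 - s) ≤ T₂ ^ (2 - s) :=
    Real.rpow_le_rpow_of_nonpos hT₂pos hTT₂ (by linarith only [hs])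
  have hTsmono : T ^ (-s) ≤ T₂ ^ (-s) :=
    Real.rpow_le_rpow_of_nonpos hT₂pos hTT₂ (by linarith only [hs0])
  -- regions
  set I : Set ℝ := {x : ℝ | |x| ≤ T₁} with hIdef
  set J : Set ℝ := {x : ℝ | T₁ < |x| ∧ |x| ≤ T} with hJdef
  set K : Set ℝ := {x : ℝ | T < |x|} with hKdef
  have hImeas : MeasurableSet I := (isClosed_le continuous_abs continuous_const).measurableSet
  have hKmeas : MeasurableSet K := (isOpen_lt continuous_const continuous_abs).measurableSet
  have hJmeas : MeasurableSet J := by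
    have : J = {x : ℝ | T₁ < |x|} ∩ {x : ℝ | |x| ≤ T} := by
      ext x; simp [hJdef, mem_setOf_eq]
    rw [this]
    exact ((isOpen_lt continuous_const continuous_abs).measurableSet).inter
      (isClosed_le continuous_abs continuous_const).measurableSet
  have hIcompl : Iᶜ = J ∪ K := by
    ext x
    simp only [hIdef, hJdef, hKdef, mem_compl_iff, mem_setOf_eq, mem_union, not_le]
    constructor
    · intro hx
      rcases le_or_gt |x| T with h | h
      · exact Or.inl ⟨hx, h⟩
      · exact Or.inr h
    · rintro (⟨h1, _⟩ | h2)
      · exact h1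
      · linarith only [h2, hTT₁]
  have hJKdisj : Disjoint J K := by
    rw [Set.disjoint_left]
    rintro x ⟨_, h2⟩ h3
    rw [hKdef, mem_setOf_eq] at h3
    linarith only [h2, h3]
  have hsplit : ∫ x, f x = (∫ x in I, f x) + ((∫ x in J, f x) + (∫ x in K, f x)) := by
    rw [← MeasureTheory.integral_add_compl hImeas hfint, hIcompl,
      setIntegral_union hJKdisj hKmeas hfint.integrableOn hfint.integrableOn]
  -- generic tail facts
  have htailφ : ∫ x in {x : ℝ | T₁ < |x|}, gauss x ≤ ε₂ := by
    have := gauss_tail hT₁1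
    rw [hexpT₁] at this
    exact this
  have hSφ : ∀ S : Set ℝ, S ⊆ {x : ℝ | T₁ < |x|} → ∫ x in S, gauss x ≤ ε₂ := by
    intro S hS
    calc ∫ x in S, gauss x ≤ ∫ x in {x : ℝ | T₁ < |x|}, gauss x :=
          setIntegral_mono_set integrable_gauss.integrableOn
            (Filter.Eventually.of_forall fun x => le_of_lt (gauss_pos x))
            (HasSubset.Subset.eventuallyLE hS)
      _ ≤ ε₂ := htailφ
  have hSφ2 : ∀ S : Set ℝ, MeasurableSet S → S ⊆ {x : ℝ | T₁ < |x|} →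
      ∫ x in S, gauss x ^ 2 ≤ ε₂ := by
    intro S hSm hS
    calc ∫ x in S, gauss x ^ 2 ≤ ∫ x in S, gauss x := by
          apply setIntegral_mono_on integrable_gauss_sq.integrableOn
            integrable_gauss.integrableOn hSm
          intro x _
          show gauss x ^ 2 ≤ gauss x
          nlinarith only [gauss_pos x, gauss_le_one x]
      _ ≤ ε₂ := hSφ S hS
  have hSu2 : ∀ S : Set ℝ, ∫ x in S, u x ^ 2 ≤ ε₂ ^ 2 := by
    intro S
    rw [hε₂sq]
    exact setIntegral_le_integral hu2int (Filter.Eventually.of_forall fun x => sq_nonneg _)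
  have hSu1 : ∀ S : Set ℝ, ∫ x in S, |u x| ≤ ε₁ := by
    intro S
    rw [hε₁]
    exact setIntegral_le_integral huabsint (Filter.Eventually.of_forall fun x => abs_nonneg _)
  have hSp : ∀ S : Set ℝ, MeasurableSet S → S ⊆ {x : ℝ | T₁ < |x|} →
      ∫ x in S, p x ≤ ε₂ + ε₁ := by
    intro S hSm hS
    have hpgu : ∀ x : ℝ, p x ≤ gauss x + |u x| := by
      intro x
      have h1 : u x = p x - gauss x := by rw [hu_def]
      have h2 : u x ≤ |u x| := le_abs_self _
      linarith only [h1, h2]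
    calc ∫ x in S, p x ≤ ∫ x in S, (gauss x + |u x|) := by
          apply setIntegral_mono_on hpint.integrableOn
            (integrable_gauss.add huabsint).integrableOn hSm
          intro x _
          exact hpgu x
      _ = (∫ x in S, gauss x) + ∫ x in S, |u x| :=
          integral_add integrable_gauss.integrableOn huabsint.integrableOn
      _ ≤ ε₂ + ε₁ := add_le_add (hSφ S hS) (hSu1 S)
  have hSxs : ∀ S : Set ℝ, ∫ x in S, |x| ^ s * p x ≤ β := by
    intro S
    rw [hβdef]
    exact setIntegral_le_integral hxspint
      (Filter.Eventually.of_forall fun x => mul_nonneg (Real.rpow_nonneg (abs_nonneg x) s) (hp0 x))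
  -- bound on the central region I
  have hBI : ∫ x in I, f x ≤ ε₁ + Real.sqrt (2 * Real.pi) * ε₂ := by
    set Cc := Real.sqrt (2 * Real.pi) * ε₂⁻¹ with hCcdef
    have hCc0 : 0 ≤ Cc := by rw [hCcdef]; positivity
    clear_value Cc
    have hgi : Integrable (fun x => u x + Cc * u x ^ 2) := huint.add (hu2int.const_mul _)
    have h1 : ∫ x in I, f x ≤ ∫ x in I, (u x + Cc * u x ^ 2) := by
      apply setIntegral_mono_on hfint.integrableOn hgi.integrableOn hImeas
      intro x hx
      have hxI : |x| ≤ T₁ := hx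
      have hCx : (gauss x)⁻¹ ≤ Cc := by
        have hexpinv : (Real.exp (-x ^ 2 / 2))⁻¹ = Real.exp (x ^ 2 / 2) := by
          rw [← Real.exp_neg]
          ring_nf
        have hxsq : x ^ 2 ≤ T₁ ^ 2 := by
          rw [← sq_abs x]
          exact pow_le_pow_left₀ (abs_nonneg x) hxI 2
        have hexple : Real.exp (x ^ 2 / 2) ≤ ε₂⁻¹ := by
          rw [← hexpT₁']
          exact Real.exp_le_exp.2 (by linarith only [hxsq])
        calc (gauss x)⁻¹ = Real.sqrt (2 * Real.pi) * (Real.exp (-x ^ 2 / 2))⁻¹ := by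
              rw [gauss, mul_inv, inv_inv]
          _ = Real.sqrt (2 * Real.pi) * Real.exp (x ^ 2 / 2) := by rw [hexpinv]
          _ ≤ Cc := by
              rw [hCcdef]
              exact mul_le_mul_of_nonneg_left hexple (Real.sqrt_nonneg _)
      have h := ptwise_center (hp0 x) (gauss_pos x) hCx
      have hux : u x = p x - gauss x := by rw [hu_def]
      rw [hf_def, hux]
      exact h
    have h2 : ∫ x in I, (u x + Cc * u x ^ 2) = (∫ x in I, u x) + Cc * ∫ x in I, u x ^ 2 := by
      rw [integral_add huint.integrableOn (hu2int.const_mul _).integrableOn,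
        MeasureTheory.integral_const_mul]
    have h3 : ∫ x in I, u x ≤ ε₁ := by
      calc ∫ x in I, u x ≤ ∫ x in I, |u x| :=
            setIntegral_mono_on huint.integrableOn huabsint.integrableOn hImeas
              (fun x _ => le_abs_self _)
        _ ≤ ε₁ := hSu1 I
    have h4 : Cc * ∫ x in I, u x ^ 2 ≤ Real.sqrt (2 * Real.pi) * ε₂ := by
      have := mul_le_mul_of_nonneg_left (hSu2 I) hCc0
      have h5 : Cc * ε₂ ^ 2 = Real.sqrt (2 * Real.pi) * ε₂ := by
        rw [hCcdef, sq, mul_assoc, ← mul_assoc ε₂⁻¹, inv_mul_cancel₀ (ne_of_gt hε₂pos), one_mul]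
      linarith only [this, h5]
    rw [h2] at h1
    linarith only [h1, h3, h4]
  -- bound on the far region K
  have hBK : ∫ x in K, f x ≤ 3 * ε₂ + ((1/2) * (β ^ (2/s) * (ε₁ + ε₂) ^ (1 - 2/s)) + (ε₁ + ε₂)) := by
    set c₁ := Real.log (Real.sqrt (2 * Real.pi)) with hc₁def
    have hc₁0 : 0 ≤ c₁ := by rw [hc₁def]; exact log_sqrt2pi_nonneg
    have hc₁1 : c₁ ≤ 1 := by rw [hc₁def]; exact log_sqrt2pi_le_one
    clear_value c₁
    set a := T ^ (2 - s) / 2 + c₁ * T ^ (-s) with hadef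
    have ha0 : 0 ≤ a := by
      rw [hadef]
      have h1' := Real.rpow_nonneg (le_of_lt hTpos) (2 - s)
      have h2' := Real.rpow_nonneg (le_of_lt hTpos) (-s)
      have h3' := mul_nonneg hc₁0 h2'
      linarith only [h1', h3']
    clear_value a
    have hgi : Integrable (fun x => 2 * gauss x ^ 2 + 2 * u x ^ 2 + a * (|x| ^ s * p x)) :=
      ((integrable_gauss_sq.const_mul 2).add (hu2int.const_mul 2)).add (hxspint.const_mul a)
    have h1 : ∫ x in K, f x ≤ ∫ x in K, (2 * gauss x ^ 2 + 2 * u x ^ 2 + a * (|x| ^ s * p x)) := by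
      apply setIntegral_mono_on hfint.integrableOn hgi.integrableOn hKmeas
      intro x hx
      have hxK : T < |x| := hx
      have hxpos : 0 < |x| := lt_trans hTpos hxK
      have ht := ptwise_tail (p x) x (hp0 x)
      have hsq : p x ^ 2 ≤ 2 * gauss x ^ 2 + 2 * u x ^ 2 := by
        have h := sq_add_bound (gauss x) (u x)
        have hpx : p x = gauss x + u x := by rw [hu_def]; ring
        rw [hpx]
        exact h
      have hx2 : x ^ 2 ≤ T ^ (2 - s) * |x| ^ s := by
        have h2' : |x| ^ (2 - s) ≤ T ^ (2 - s) :=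
          Real.rpow_le_rpow_of_nonpos hTpos (le_of_lt hxK) (by linarith)
        have h3' : x ^ 2 = |x| ^ s * |x| ^ (2 - s) := by
          rw [← Real.rpow_add hxpos, show s + (2 - s) = 2 by ring, Real.rpow_two, sq_abs]
        rw [h3']
        calc |x| ^ s * |x| ^ (2 - s) ≤ |x| ^ s * T ^ (2 - s) :=
              mul_le_mul_of_nonneg_left h2' (Real.rpow_nonneg (abs_nonneg x) s)
          _ = T ^ (2 - s) * |x| ^ s := by ring
      have hone : 1 ≤ T ^ (-s) * |x| ^ s := by
        have h4' : T ^ s ≤ |x| ^ s :=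
          Real.rpow_le_rpow (le_of_lt hTpos) (le_of_lt hxK) (le_of_lt hs0)
        have h5' : T ^ (-s) * T ^ s = 1 := by
          rw [← Real.rpow_add hTpos]
          norm_num
        have h6' : 0 < T ^ (-s) := Real.rpow_pos_of_pos hTpos _
        calc (1:ℝ) = T ^ (-s) * T ^ s := h5'.symm
          _ ≤ T ^ (-s) * |x| ^ s := mul_le_mul_of_nonneg_left h4' (le_of_lt h6')
      have hB : x ^ 2 / 2 * p x ≤ T ^ (2 - s) / 2 * (|x| ^ s * p x) := by
        have := mul_le_mul_of_nonneg_right hx2 (hp0 x)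
        calc x ^ 2 / 2 * p x = (x ^ 2 * p x) / 2 := by ring
          _ ≤ (T ^ (2 - s) * |x| ^ s * p x) / 2 := by linarith only [this]
          _ = T ^ (2 - s) / 2 * (|x| ^ s * p x) := by ring
      have hC : c₁ * p x ≤ c₁ * T ^ (-s) * (|x| ^ s * p x) := by
        have h7' : p x ≤ T ^ (-s) * |x| ^ s * p x := by
          have := mul_le_mul_of_nonneg_right hone (hp0 x)
          linarith only [this]
        calc c₁ * p x ≤ c₁ * (T ^ (-s) * |x| ^ s * p x) :=
              mul_le_mul_of_nonneg_left h7' hc₁0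
          _ = c₁ * T ^ (-s) * (|x| ^ s * p x) := by ring
      rw [hf_def]
      calc p x * Real.log (p x / gauss x)
          ≤ p x ^ 2 + x ^ 2 / 2 * p x + c₁ * p x := by rw [hc₁def]; exact ht
        _ ≤ (2 * gauss x ^ 2 + 2 * u x ^ 2) + T ^ (2 - s) / 2 * (|x| ^ s * p x)
            + c₁ * T ^ (-s) * (|x| ^ s * p x) := add_le_add (add_le_add hsq hB) hC
        _ = 2 * gauss x ^ 2 + 2 * u x ^ 2 + a * (|x| ^ s * p x) := by rw [hadef]; ring
    have hiA : Integrable (fun x => 2 * gauss x ^ 2) := integrable_gauss_sq.const_mul 2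
    have hiB : Integrable (fun x => 2 * u x ^ 2) := hu2int.const_mul 2
    have hiAB : Integrable (fun x => 2 * gauss x ^ 2 + 2 * u x ^ 2) := hiA.add hiB
    have hiC : Integrable (fun x => a * (|x| ^ s * p x)) := hxspint.const_mul a
    have h2 : ∫ x in K, (2 * gauss x ^ 2 + 2 * u x ^ 2 + a * (|x| ^ s * p x))
        = 2 * (∫ x in K, gauss x ^ 2) + 2 * (∫ x in K, u x ^ 2) + a * ∫ x in K, |x| ^ s * p x := by
      rw [integral_add hiAB.integrableOn hiC.integrableOn,
        integral_add hiA.integrableOn hiB.integrableOn,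
        MeasureTheory.integral_const_mul, MeasureTheory.integral_const_mul,
        MeasureTheory.integral_const_mul]
    have hKsub : K ⊆ {x : ℝ | T₁ < |x|} := by
      intro x hx
      have : T < |x| := hx
      exact lt_of_le_of_lt hTT₁ this
    have h3 : ∫ x in K, gauss x ^ 2 ≤ ε₂ := hSφ2 K hKmeas hKsub
    have h4 : ∫ x in K, u x ^ 2 ≤ ε₂ ^ 2 := hSu2 K
    have h5 : a * ∫ x in K, |x| ^ s * p x ≤ a * β := by
      apply mul_le_mul_of_nonneg_left (hSxs K) ha0
    have h6 : a * β ≤ (1/2) * (β ^ (2/s) * (ε₁ + ε₂) ^ (1 - 2/s)) + (ε₁ + ε₂) := by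
      have h7 : β * T ^ (2 - s) ≤ β * T₂ ^ (2 - s) := mul_le_mul_of_nonneg_left hT2mono hβ0
      have h8 : β * T ^ (-s) ≤ β * T₂ ^ (-s) := mul_le_mul_of_nonneg_left hTsmono hβ0
      rw [hβrw] at h7
      rw [hkey1] at h8
      have h9 : c₁ * (β * T ^ (-s)) ≤ ε₁ + ε₂ := by
        have h10 : 0 ≤ β * T ^ (-s) :=
          mul_nonneg hβ0 (Real.rpow_nonneg (le_of_lt hTpos) _)
        linarith only [h8, mul_nonneg (sub_nonneg.2 hc₁1) h10]
      calc a * β = (β * T ^ (2 - s)) / 2 + c₁ * (β * T ^ (-s)) := by rw [hadef]; ring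
        _ ≤ (1/2) * (β ^ (2/s) * (ε₁ + ε₂) ^ (1 - 2/s)) + (ε₁ + ε₂) := by linarith only [h7, h9]
    have hε₂sqle : ε₂ ^ 2 ≤ ε₂ / 2 := by
      nlinarith only [mul_le_mul_of_nonneg_left hε₂half hε₂0]
    rw [h2] at h1
    linarith only [h1, h3, h4, h5, h6, hε₂sqle]
  -- bound on the middle region J
  have hBJ : ∫ x in J, f x ≤ 3 * ε₂ + ((1/2) * (β ^ (2/s) * (ε₁ + ε₂) ^ (1 - 2/s)) + (ε₁ + ε₂)) := by
    rcases le_total T₂ T₁ with hcase | hcase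
    · have hTeq : T = T₁ := by rw [hTdef]; exact max_eq_left hcase
      have hJempty : J = ∅ := by
        ext x
        simp only [hJdef, mem_setOf_eq, mem_empty_iff_false, iff_false, not_and, not_le]
        intro h1
        rw [hTeq]
        exact h1
      rw [hJempty]
      simp only [Measure.restrict_empty, integral_zero_measure]
      have h0 : (0:ℝ) ≤ (1/2) * (β ^ (2/s) * (ε₁ + ε₂) ^ (1 - 2/s)) := by linarith only [hXnn]
      linarith only [h0, hε₂0, hε₁0]
    · have hTeq : T = T₂ := by rw [hTdef]; exact max_eq_right hcase
      set c₁ := Real.log (Real.sqrt (2 * Real.pi)) with hc₁def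
      have hc₁0 : 0 ≤ c₁ := by rw [hc₁def]; exact log_sqrt2pi_nonneg
      have hc₁1 : c₁ ≤ 1 := by rw [hc₁def]; exact log_sqrt2pi_le_one
      clear_value c₁
      set a := T₂ ^ 2 / 2 + c₁ with hadef
      have ha0 : 0 ≤ a := by
        rw [hadef]
        have h0' := sq_nonneg T₂
        linarith only [h0', hc₁0]
      clear_value a
      have hgi : Integrable (fun x => 2 * gauss x ^ 2 + 2 * u x ^ 2 + a * p x) :=
        ((integrable_gauss_sq.const_mul 2).add (hu2int.const_mul 2)).add (hpint.const_mul a)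
      have h1 : ∫ x in J, f x ≤ ∫ x in J, (2 * gauss x ^ 2 + 2 * u x ^ 2 + a * p x) := by
        apply setIntegral_mono_on hfint.integrableOn hgi.integrableOn hJmeas
        intro x hx
        obtain ⟨hx1, hx2⟩ := hx
        have hxT₂ : |x| ≤ T₂ := by rw [← hTeq]; exact hx2
        have ht := ptwise_tail (p x) x (hp0 x)
        have hsq : p x ^ 2 ≤ 2 * gauss x ^ 2 + 2 * u x ^ 2 := by
          have h := sq_add_bound (gauss x) (u x)
          have hpx : p x = gauss x + u x := by rw [hu_def]; ring
          rw [hpx]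
          exact h
        have hxsq : x ^ 2 ≤ T₂ ^ 2 := by
          rw [← sq_abs x]
          exact pow_le_pow_left₀ (abs_nonneg x) hxT₂ 2
        have hB : x ^ 2 / 2 * p x ≤ T₂ ^ 2 / 2 * p x := by
          apply mul_le_mul_of_nonneg_right _ (hp0 x)
          linarith only [hxsq]
        rw [hf_def]
        calc p x * Real.log (p x / gauss x)
            ≤ p x ^ 2 + x ^ 2 / 2 * p x + c₁ * p x := by rw [hc₁def]; exact ht
          _ ≤ (2 * gauss x ^ 2 + 2 * u x ^ 2) + T₂ ^ 2 / 2 * p x + c₁ * p x :=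
              add_le_add (add_le_add hsq hB) le_rfl
          _ = 2 * gauss x ^ 2 + 2 * u x ^ 2 + a * p x := by rw [hadef]; ring
      have hiA : Integrable (fun x => 2 * gauss x ^ 2) := integrable_gauss_sq.const_mul 2
      have hiB : Integrable (fun x => 2 * u x ^ 2) := hu2int.const_mul 2
      have hiAB : Integrable (fun x => 2 * gauss x ^ 2 + 2 * u x ^ 2) := hiA.add hiB
      have hiC : Integrable (fun x => a * p x) := hpint.const_mul a
      have h2 : ∫ x in J, (2 * gauss x ^ 2 + 2 * u x ^ 2 + a * p x)
          = 2 * (∫ x in J, gauss x ^ 2) + 2 * (∫ x in J, u x ^ 2) + a * ∫ x in J, p x := by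
        rw [integral_add hiAB.integrableOn hiC.integrableOn,
          integral_add hiA.integrableOn hiB.integrableOn,
          MeasureTheory.integral_const_mul, MeasureTheory.integral_const_mul,
          MeasureTheory.integral_const_mul]
      have hJsub : J ⊆ {x : ℝ | T₁ < |x|} := by
        rintro x ⟨h1', _⟩
        exact h1'
      have h3 : ∫ x in J, gauss x ^ 2 ≤ ε₂ := hSφ2 J hJmeas hJsub
      have h4 : ∫ x in J, u x ^ 2 ≤ ε₂ ^ 2 := hSu2 J
      have h5 : a * ∫ x in J, p x ≤ a * (ε₂ + ε₁) := by
        apply mul_le_mul_of_nonneg_left (hSp J hJmeas hJsub) ha0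
      have hJkey : T₂ ^ 2 * (ε₁ + ε₂) = β * T₂ ^ (2 - s) := by
        have h7 : (T₂:ℝ) ^ (2:ℕ) = T₂ ^ ((2:ℝ)) := (Real.rpow_two T₂).symm
        rw [h7, show (2:ℝ) = s + (2 - s) by ring, Real.rpow_add hT₂pos, hT₂s]
        field_simp
        congr 1; ring
      have h6 : a * (ε₂ + ε₁) ≤ (1/2) * (β ^ (2/s) * (ε₁ + ε₂) ^ (1 - 2/s)) + (ε₁ + ε₂) := by
        have h8 : T₂ ^ 2 / 2 * (ε₂ + ε₁) = (1/2) * (β * T₂ ^ (2 - s)) := by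
          rw [← hJkey]
          ring
        have h9 : c₁ * (ε₂ + ε₁) ≤ ε₁ + ε₂ := by
          have h9' := mul_le_mul_of_nonneg_right hc₁1 (by linarith only [hε₁0, hε₂0] : (0:ℝ) ≤ ε₂ + ε₁)
          linarith only [h9']
        calc a * (ε₂ + ε₁) = T₂ ^ 2 / 2 * (ε₂ + ε₁) + c₁ * (ε₂ + ε₁) := by rw [hadef]; ring
          _ = (1/2) * (β * T₂ ^ (2 - s)) + c₁ * (ε₂ + ε₁) := by rw [h8]
          _ ≤ (1/2) * (β ^ (2/s) * (ε₁ + ε₂) ^ (1 - 2/s)) + (ε₁ + ε₂) := by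
              rw [hβrw]
              linarith only [h9]
      have hε₂sqle : ε₂ ^ 2 ≤ ε₂ / 2 := by
        nlinarith only [mul_le_mul_of_nonneg_left hε₂half hε₂0]
      rw [h2] at h1
      linarith only [h1, h3, h4, h5, h6, hε₂sqle]
  -- combine
  have hsqrtε₂ : Real.sqrt (2 * Real.pi) * ε₂ ≤ 3 * ε₂ :=
    mul_le_mul_of_nonneg_right sqrt2pi_le_three hε₂0
  rw [hsplit]
  linarith only [hBI, hBJ, hBK, hsqrtε₂, hXnn, hε₁0, hε₂0]
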